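/- Let X be an infinite-dimensional Banach space with the following property restricted to points of the sphere: for every n ∈ ℕ, convex nonempty relatively weakly open subsets U_1,…,U_n of B_X, λ_1,…,λ_n ∈ [0,1] with Σλ_i = 1, every point x of the form x = Σ λ_i x_i with x_i ∈ S_X ∩ U_i, and every ε > 0, there exists u ∈ Σ λ_i U_i with ‖x − u‖ ≥ ‖x‖ + 1 − ε. Then X has the full diametral strong diameter 2 property (i.e., the same conclusion holds for arbitrary x ∈ Σ λ_i U_i). -/
import Mathlib


/-- `U` is a relatively weakly open subset of the closed unit ball of `X`. -/
def RelWeakOpen {X : Type*} [NormedAddCommGroup X] [NormedSpace ℝ X] (U : Set X) : Prop :=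
  U ⊆ Metric.closedBall 0 1 ∧
    ∀ a ∈ U, ∃ (m : ℕ) (f : Fin m → (X →L[ℝ] ℝ)) (δ : ℝ), 0 < δ ∧
      ∀ b ∈ Metric.closedBall (0 : X) 1, (∀ j, |f j b - f j a| < δ) → b ∈ U

/-- The convex combination `∑ λᵢ Uᵢ` of sets, as a set. -/
def combo {X : Type*} [NormedAddCommGroup X] [NormedSpace ℝ X]
    {n : ℕ} (lam : Fin n → ℝ) (U : Fin n → Set X) : Set X :=
  {w : X | ∃ u : Fin n → X, (∀ i, u i ∈ U i) ∧ w = ∑ i, lam i • u i}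

/-- The diametral strong diameter 2 property. -/
def DSD2P (X : Type*) [NormedAddCommGroup X] [NormedSpace ℝ X] : Prop :=
  ∀ (n : ℕ) (U : Fin n → Set X), (∀ i, (U i).Nonempty) → (∀ i, RelWeakOpen (U i)) →
    ∀ lam : Fin n → ℝ, (∀ i, lam i ∈ Set.Icc (0 : ℝ) 1) → ∑ i, lam i = 1 →
    ∀ x ∈ combo lam U, ∀ ε > (0 : ℝ), ∃ u ∈ combo lam U, ‖x - u‖ ≥ ‖x‖ + 1 - ε

lemma exists_ker_vec {X : Type*} [NormedAddCommGroup X] [NormedSpace ℝ X]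
    (hX : ¬ FiniteDimensional ℝ X) {m : ℕ} (f : Fin m → (X →L[ℝ] ℝ)) :
    ∃ v : X, v ≠ 0 ∧ ∀ j, f j v = 0 := by
  by_contra hc
  push_neg at hc
  apply hX
  have hinj : Function.Injective
      (LinearMap.pi (fun j => (f j : X →ₗ[ℝ] ℝ)) : X →ₗ[ℝ] (Fin m → ℝ)) := by
    rw [← LinearMap.ker_eq_bot, LinearMap.ker_eq_bot']
    intro v hv
    by_contra hv0
    obtain ⟨j, hj⟩ := hc v hv0
    exact hj (by simpa using congrFun hv j)
  exact FiniteDimensional.of_injective _ hinj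


lemma sphere_decomp {X : Type*} [NormedAddCommGroup X] [NormedSpace ℝ X]
    {a v : X} (ha : ‖a‖ ≤ 1) (hv : v ≠ 0) :
    ∃ (t s μ : ℝ), ‖a + t • v‖ = 1 ∧ ‖a + s • v‖ = 1 ∧ μ ∈ Set.Icc (0:ℝ) 1 ∧
      a = μ • (a + t • v) + (1 - μ) • (a + s • v) := by
  have hv0 : (0:ℝ) < ‖v‖ := norm_pos_iff.mpr hv
  set T : ℝ := 3 / ‖v‖ with hT
  have hT0 : 0 < T := by positivity
  have hcont : Continuous (fun t : ℝ => ‖a + t • v‖) := by fun_prop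
  have hg0 : ‖a + (0:ℝ) • v‖ ≤ 1 := by simpa using ha
  have hbig : ∀ t : ℝ, |t| = T → 1 ≤ ‖a + t • v‖ := by
    intro t ht
    have h1 : ‖t • v‖ ≤ ‖a + t • v‖ + ‖a‖ := by
      calc ‖t • v‖ = ‖(a + t • v) - a‖ := by rw [add_sub_cancel_left]
        _ ≤ ‖a + t • v‖ + ‖a‖ := norm_sub_le _ _
    have h2 : ‖t • v‖ = 3 := by
      rw [norm_smul, Real.norm_eq_abs, ht, hT, div_mul_cancel₀]
      exact ne_of_gt hv0
    linarith
  obtain ⟨t, htmem, hgt⟩ := intermediate_value_Icc (le_of_lt hT0) hcont.continuousOn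
    (Set.mem_Icc.mpr ⟨hg0, hbig T (abs_of_pos hT0)⟩)
  obtain ⟨s, hsmem, hgs⟩ := intermediate_value_Icc' (by linarith : -T ≤ (0:ℝ)) hcont.continuousOn
    (Set.mem_Icc.mpr ⟨hg0, hbig (-T) (by rw [abs_neg, abs_of_pos hT0])⟩)
  have ht0 : 0 ≤ t := htmem.1
  have hs0 : s ≤ 0 := hsmem.2
  by_cases hts : t - s = 0
  · have ht' : t = 0 := le_antisymm (by linarith) ht0
    refine ⟨t, s, 1/2, hgt, hgs, ⟨by norm_num, by norm_num⟩, ?_⟩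
    have hs' : s = 0 := by linarith
    rw [ht', hs']
    module
  · have hts0 : 0 < t - s := lt_of_le_of_ne (by linarith) (Ne.symm hts)
    refine ⟨t, s, -s / (t - s), hgt, hgs, ⟨div_nonneg (by linarith) (le_of_lt hts0), ?_⟩, ?_⟩
    · rw [div_le_one hts0]; linarith
    · have hc : (-s / (t - s)) * t + (1 - -s / (t - s)) * s = 0 := by
        field_simp
        ring
      have : (-s / (t - s)) • (a + t • v) + (1 - -s / (t - s)) • (a + s • v)
          = a + ((-s / (t - s)) * t + (1 - -s / (t - s)) * s) • v := by module
      rw [this, hc, zero_smul, add_zero]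

lemma key {X : Type*} [NormedAddCommGroup X] [NormedSpace ℝ X]
    (hX : ¬ FiniteDimensional ℝ X) {U : Set X} (hU : RelWeakOpen U) {a : X} (ha : a ∈ U) :
    ∃ (V : Set X) (y z : X) (μ : ℝ), V ⊆ U ∧ a ∈ V ∧ RelWeakOpen V ∧ Convex ℝ V ∧
      y ∈ Metric.sphere (0:X) 1 ∩ V ∧ z ∈ Metric.sphere (0:X) 1 ∩ V ∧
      μ ∈ Set.Icc (0:ℝ) 1 ∧ a = μ • y + (1 - μ) • z := by
  obtain ⟨m, f, δ, hδ, hf⟩ := hU.2 a ha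
  have haB : a ∈ Metric.closedBall (0:X) 1 := hU.1 ha
  have haN : ‖a‖ ≤ 1 := by simpa [mem_closedBall_zero_iff] using haB
  set V : Set X := {b | b ∈ Metric.closedBall (0:X) 1 ∧ ∀ j, |f j b - f j a| < δ} with hV
  have hVU : V ⊆ U := fun b hb => hf b hb.1 hb.2
  have haV : a ∈ V := ⟨haB, fun j => by simpa using hδ⟩
  have hVconv : Convex ℝ V := by
    intro b₁ hb₁ b₂ hb₂ p q hp hq hpq
    refine ⟨convex_closedBall _ _ hb₁.1 hb₂.1 hp hq hpq, fun j => ?_⟩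
    have hlin : f j (p • b₁ + q • b₂) - f j a
        = p * (f j b₁ - f j a) + q * (f j b₂ - f j a) := by
      simp only [map_add, map_smul, smul_eq_mul]
      linear_combination (f j a) * hpq
    rw [hlin]
    set M := max |f j b₁ - f j a| |f j b₂ - f j a| with hM
    have hMδ : M < δ := max_lt (hb₁.2 j) (hb₂.2 j)
    calc |p * (f j b₁ - f j a) + q * (f j b₂ - f j a)|
        ≤ p * |f j b₁ - f j a| + q * |f j b₂ - f j a| := by
          refine (abs_add_le _ _).trans ?_
          rw [abs_mul, abs_mul, abs_of_nonneg hp, abs_of_nonneg hq]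
      _ ≤ p * M + q * M := by gcongr <;> [exact le_max_left _ _; exact le_max_right _ _]
      _ = M := by rw [← add_mul, hpq, one_mul]
      _ < δ := hMδ
  have hVro : RelWeakOpen V := by
    refine ⟨fun b hb => hb.1, fun b hb => ?_⟩
    set f' : Fin (m+1) → (X →L[ℝ] ℝ) := Fin.cons 0 f with hf'
    refine ⟨m + 1, f', Finset.univ.inf' Finset.univ_nonempty
      (fun j : Fin (m+1) => δ - |f' j b - f' j a|),
      ?_, ?_⟩
    · rw [Finset.lt_inf'_iff]
      intro j _
      refine Fin.cases ?_ ?_ j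
      · simpa [hf'] using hδ
      · intro i
        simp only [hf', Fin.cons_succ]
        linarith [hb.2 i]
    · intro c hc hcf
      refine ⟨hc, fun j => ?_⟩
      have h1 := hcf j.succ
      have h2 : (Finset.univ.inf' Finset.univ_nonempty
          (fun j : Fin (m+1) => δ - |f' j b - f' j a|))
          ≤ δ - |f' j.succ b - f' j.succ a| :=
        Finset.inf'_le _ (Finset.mem_univ j.succ)
      simp only [hf', Fin.cons_succ] at h1 h2
      calc |f j c - f j a| ≤ |f j c - f j b| + |f j b - f j a| := abs_sub_le _ _ _
        _ < (δ - |f j b - f j a|) + |f j b - f j a| := by linarith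
        _ = δ := by ring
  obtain ⟨v, hv0, hvker⟩ := exists_ker_vec hX f
  obtain ⟨t, s, μ, hyt, hzs, hμ, hdec⟩ := sphere_decomp haN hv0
  have hmemV : ∀ r : ℝ, ‖a + r • v‖ = 1 → a + r • v ∈ V := by
    intro r hr
    refine ⟨by simpa [mem_closedBall_zero_iff] using le_of_eq hr, fun j => ?_⟩
    have : f j (a + r • v) = f j a := by simp [map_add, map_smul, hvker j]
    rw [this]
    simpa using hδ
  exact ⟨V, a + t • v, a + s • v, μ, hVU, haV, hVro, hVconv,
    ⟨by simpa [mem_sphere_iff_norm] using hyt, hmemV t hyt⟩,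
    ⟨by simpa [mem_sphere_iff_norm] using hzs, hmemV s hzs⟩, hμ, hdec⟩

/-- If an infinite-dimensional Banach space satisfies the DSD2P condition for convex
relatively weakly open sets and points `x = ∑ λᵢ xᵢ` with `xᵢ ∈ S_X ∩ Uᵢ`, then it has
the full DSD2P. -/
theorem stmt7 (X : Type*) [NormedAddCommGroup X] [NormedSpace ℝ X] [CompleteSpace X]
    (hX : ¬ FiniteDimensional ℝ X)
    (h : ∀ (n : ℕ) (U : Fin n → Set X), (∀ i, (U i).Nonempty) → (∀ i, RelWeakOpen (U i)) →
      (∀ i, Convex ℝ (U i)) →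
      ∀ lam : Fin n → ℝ, (∀ i, lam i ∈ Set.Icc (0 : ℝ) 1) → ∑ i, lam i = 1 →
      ∀ xi : Fin n → X, (∀ i, xi i ∈ Metric.sphere (0 : X) 1 ∩ U i) →
      ∀ ε > (0 : ℝ), ∃ u ∈ combo lam U, ‖(∑ i, lam i • xi i) - u‖ ≥ ‖∑ i, lam i • xi i‖ + 1 - ε) :
    DSD2P X := by
  intro n U hne hro lam hlam hsum x hx ε hε
  obtain ⟨xi, hxi, rfl⟩ := hx
  choose V y z μ hVU hxV hVro hVconv hy hz hμ hdec using fun i => key hX (hro i) (hxi i)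
  set e := finSumFinEquiv (m := n) (n := n) with he
  set W : Fin (n+n) → Set X := fun k => Sum.elim V V (e.symm k) with hW
  set lam' : Fin (n+n) → ℝ :=
    fun k => Sum.elim (fun i => lam i * μ i) (fun i => lam i * (1 - μ i)) (e.symm k) with hlam'
  set w : Fin (n+n) → X := fun k => Sum.elim y z (e.symm k) with hw
  have hke : ∀ k : Fin (n+n), ∃ p, k = e p := fun k => ⟨e.symm k, (e.apply_symm_apply k).symm⟩
  have hWne : ∀ k, (W k).Nonempty := by
    intro k; obtain ⟨p, rfl⟩ := hke k
    rcases p with i | i <;> simp only [hW, Equiv.symm_apply_apply, Sum.elim_inl, Sum.elim_inr]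
    · exact ⟨xi i, hxV i⟩
    · exact ⟨xi i, hxV i⟩
  have hWro : ∀ k, RelWeakOpen (W k) := by
    intro k; obtain ⟨p, rfl⟩ := hke k
    rcases p with i | i <;> simp only [hW, Equiv.symm_apply_apply, Sum.elim_inl, Sum.elim_inr]
    · exact hVro i
    · exact hVro i
  have hWconv : ∀ k, Convex ℝ (W k) := by
    intro k; obtain ⟨p, rfl⟩ := hke k
    rcases p with i | i <;> simp only [hW, Equiv.symm_apply_apply, Sum.elim_inl, Sum.elim_inr]
    · exact hVconv i
    · exact hVconv i
  have hlam'mem : ∀ k, lam' k ∈ Set.Icc (0:ℝ) 1 := by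
    have h1 : ∀ i, lam i * μ i ∈ Set.Icc (0:ℝ) 1 := fun i =>
      ⟨mul_nonneg (hlam i).1 (hμ i).1,
        mul_le_one₀ (hlam i).2 (hμ i).1 (hμ i).2⟩
    have h2 : ∀ i, lam i * (1 - μ i) ∈ Set.Icc (0:ℝ) 1 := fun i =>
      ⟨mul_nonneg (hlam i).1 (by linarith [(hμ i).2]),
        mul_le_one₀ (hlam i).2 (by linarith [(hμ i).2]) (by linarith [(hμ i).1])⟩
    intro k; obtain ⟨p, rfl⟩ := hke k
    rcases p with i | i <;> simp only [hlam', Equiv.symm_apply_apply, Sum.elim_inl, Sum.elim_inr]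
    · exact h1 i
    · exact h2 i
  have hsum' : ∑ k, lam' k = 1 := by
    rw [hlam']
    rw [← Equiv.sum_comp e (fun k =>
      Sum.elim (fun i => lam i * μ i) (fun i => lam i * (1 - μ i)) (e.symm k))]
    simp only [Equiv.symm_apply_apply]
    rw [Fintype.sum_sum_type]
    simp only [Sum.elim_inl, Sum.elim_inr]
    rw [← Finset.sum_add_distrib]
    calc ∑ i, (lam i * μ i + lam i * (1 - μ i)) = ∑ i, lam i := by
          apply Finset.sum_congr rfl; intro i _; ring
      _ = 1 := hsum
  have hwmem : ∀ k, w k ∈ Metric.sphere (0:X) 1 ∩ W k := by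
    intro k; obtain ⟨p, rfl⟩ := hke k
    rcases p with i | i <;>
      simp only [hw, hW, Equiv.symm_apply_apply, Sum.elim_inl, Sum.elim_inr]
    · exact hy i
    · exact hz i
  have hxeq : ∑ k, lam' k • w k = ∑ i, lam i • xi i := by
    rw [hlam', hw]
    rw [← Equiv.sum_comp e (fun k =>
      Sum.elim (fun i => lam i * μ i) (fun i => lam i * (1 - μ i)) (e.symm k)
        • Sum.elim y z (e.symm k))]
    simp only [Equiv.symm_apply_apply]
    rw [Fintype.sum_sum_type]
    simp only [Sum.elim_inl, Sum.elim_inr]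
    rw [← Finset.sum_add_distrib]
    apply Finset.sum_congr rfl
    intro i _
    rw [hdec i, mul_smul, mul_smul, ← smul_add]
  obtain ⟨u, hu, hnorm⟩ := h (n+n) W hWne hWro hWconv lam' hlam'mem hsum' w hwmem ε hε
  rw [hxeq] at hnorm
  refine ⟨u, ?_, hnorm⟩
  obtain ⟨u', hu', rfl⟩ := hu
  refine ⟨fun i => μ i • u' (e (Sum.inl i)) + (1 - μ i) • u' (e (Sum.inr i)), ?_, ?_⟩
  · intro i
    apply hVU i
    have ha : u' (e (Sum.inl i)) ∈ V i := by
      have := hu' (e (Sum.inl i)); simpa [hW] using this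
    have hb : u' (e (Sum.inr i)) ∈ V i := by
      have := hu' (e (Sum.inr i)); simpa [hW] using this
    exact hVconv i ha hb (hμ i).1 (by linarith [(hμ i).2]) (by ring)
  · rw [← Equiv.sum_comp e (fun k => lam' k • u' k)]
    rw [Fintype.sum_sum_type]
    simp only [hlam', Equiv.symm_apply_apply, Sum.elim_inl, Sum.elim_inr]
    rw [← Finset.sum_add_distrib]
    apply Finset.sum_congr rfl
    intro i _
    rw [mul_smul, mul_smul, ← smul_add]
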